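/- Let G be a finite abelian group and K a field containing an element of multiplicative order |G|. Let Ĝ be the group of characters from G to K^*, and let a_1,...,a_k ∈ G. Then a_1,...,a_k are pairwise distinct if and only if there exist χ_1,...,χ_k ∈ Ĝ such that det(χ_i(a_j))_{1≤i,j≤k} ≠ 0. -/

import Mathlib

open Matrix

/-- Auxiliary: a linearly independent family of `k` functions on a finite type
admits `k` evaluation points making the evaluation matrix invertible. -/
lemma exists_points_det_ne_zero {K : Type*} [Field K] {H : Type*} [Fintype H] {k : ℕ}
    {v : Fin k → H → K} (hv : LinearIndependent K v) :
    ∃ χ : Fin k → H, (Matrix.of fun i j => v j (χ i)).det ≠ 0 := by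
  classical
  -- the matrix with rows `v j`
  set M : Matrix (Fin k) H K := Matrix.of fun j h => v j h with hM
  have hrank : M.rank = k := by
    simpa using (show LinearIndependent K M from hv).rank_matrix
  -- the span of the columns of `M` is everything
  have hspan : Submodule.span K (Set.range Mᵀ) = ⊤ := by
    apply Submodule.eq_top_of_finrank_eq
    rw [show Set.range (Mᵀ : H → Fin k → K) = Set.range M.col from rfl,
      ← Matrix.rank_eq_finrank_span_cols, hrank]
    simp [Module.finrank_pi]
  obtain ⟨b, hbsub, hbspan, hbli⟩ := exists_linearIndependent K (Set.range Mᵀ)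
  rw [hspan] at hbspan
  have hbasis : Module.Basis b K (Fin k → K) := Module.Basis.mk hbli (by rw [Subtype.range_val, hbspan])
  have : Fintype b := FiniteDimensional.fintypeBasisIndex hbasis
  have hcard : Fintype.card b = k := by
    have := Module.finrank_eq_card_basis hbasis
    simpa [Module.finrank_pi] using this.symm
  let e : Fin k ≃ b := (Fintype.equivFinOfCardEq hcard).symm
  -- choose preimages
  have hchoice : ∀ i : Fin k, ∃ h : H, Mᵀ h = (e i : Fin k → K) := fun i =>
    hbsub (e i).2
  choose χ hχ using hchoice
  refine ⟨χ, ?_⟩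
  have hrows : LinearIndependent K (fun i : Fin k => (Matrix.of fun i j => v j (χ i)) i) := by
    have : (fun i : Fin k => (Matrix.of fun i j => v j (χ i)) i) =
        fun i : Fin k => ((e i : Fin k → K)) := by
      funext i
      have := hχ i
      funext j
      exact congrFun this j ▸ rfl
    rw [this]
    exact hbli.comp (fun i => e i) (fun i j hij => e.injective hij)
  exact ((Matrix.isUnit_iff_isUnit_det _).mp
    (Matrix.linearIndependent_rows_iff_isUnit.mp hrows)).ne_zero

/-- Lemma 3.1 (first part): if `K` contains an element of multiplicative order `|G|`,
then `a_1, ..., a_k ∈ G` are pairwise distinct iff some characters `χ_1, ..., χ_k`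
of `G` with values in `Kˣ` make `det (χ_i (a_j))` nonzero. -/
theorem distinct_iff_det_ne_zero {G : Type*} [CommGroup G] [Fintype G]
    {K : Type*} [Field K] (hK : ∃ x : Kˣ, orderOf x = Fintype.card G)
    {k : ℕ} (a : Fin k → G) :
    Function.Injective a ↔
      ∃ χ : Fin k → (G →* Kˣ),
        Matrix.det (Matrix.of fun i j => (χ i (a j) : K)) ≠ 0 := by
  classical
  obtain ⟨x, hx⟩ := hK
  have hcardpos : 0 < Fintype.card G := Fintype.card_pos
  have : NeZero (Fintype.card G) := ⟨hcardpos.ne'⟩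
  -- `K` has enough roots of unity of order `card G`, hence of order `exponent G`
  have hprim : IsPrimitiveRoot (x : K) (Fintype.card G) := by
    rw [IsPrimitiveRoot.coe_units_iff, ← hx]
    exact IsPrimitiveRoot.orderOf x
  have hcard : HasEnoughRootsOfUnity K (Fintype.card G) :=
    { prim := ⟨(x : K), hprim⟩
      cyc := rootsOfUnity.isCyclic K _ }
  have hexp : HasEnoughRootsOfUnity K (Monoid.exponent G) :=
    HasEnoughRootsOfUnity.of_dvd K Group.exponent_dvd_card
  -- characters separate points
  have hsep : ∀ {g g' : G}, (∀ χ : G →* Kˣ, χ g = χ g') → g = g' := by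
    intro g g' h
    by_contra hne
    have hne' : g * g'⁻¹ ≠ 1 := by
      simpa [mul_inv_eq_one] using hne
    obtain ⟨φ, hφ⟩ := CommGroup.exists_apply_ne_one_of_hasEnoughRootsOfUnity G K hne'
    apply hφ
    rw [_root_.map_mul, map_inv, h φ, mul_inv_cancel]
  constructor
  · intro ha
    -- the character group is finite
    have hfin : Finite (G →* Kˣ) := by
      obtain ⟨eqv⟩ := CommGroup.monoidHom_mulEquiv_of_hasEnoughRootsOfUnity G K
      exact Finite.of_equiv G eqv.symm.toEquiv
    have : Fintype (G →* Kˣ) := Fintype.ofFinite _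
    -- evaluation monoid homs from the character group
    let φ : G → ((G →* Kˣ) →* K) := fun g =>
      (Units.coeHom K).comp ((MonoidHom.eval g).comp (MonoidHom.id (G →* Kˣ)))
    have hφinj : Function.Injective (fun j : Fin k => φ (a j)) := by
      intro i j hij
      apply ha
      apply hsep
      intro χ
      have := congrFun (congrArg (fun f : (G →* Kˣ) →* K => (f : (G →* Kˣ) → K)) hij) χ
      exact Units.ext this
    have hli : LinearIndependent K (fun j : Fin k => fun χ : G →* Kˣ => (χ (a j) : K)) := by
      have := (linearIndependent_monoidHom (G →* Kˣ) K).comp _ hφinj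
      exact this
    obtain ⟨χ, hχ⟩ := exists_points_det_ne_zero hli
    exact ⟨χ, hχ⟩
  · rintro ⟨χ, hχ⟩ i j hij
    by_contra hne
    exact hχ (Matrix.det_zero_of_column_eq hne fun r => by simp [hij])
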